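/- For complex q with |q| < 1, the identity (1/2) + sum_{n=1}^{infinity} [(-q^2;q^2)_{n-1} / (q^2;q^2)_n] (-q)^n = (1/2) * (q;q^2)_infinity / (-q;q^2)_infinity holds. -/

import Mathlib

/-- `(A;q)_n` -/
noncomputable def qp (q a : ℂ) (n : ℕ) : ℂ :=
  ∏ k ∈ Finset.range n, (1 - a * q ^ k)

/-- `(A;q)_∞` -/
noncomputable def qpinf (q a : ℂ) : ℂ := ∏' k : ℕ, (1 - a * q ^ k)

open Filter Topology Finset

set_option maxHeartbeats 1000000

namespace QBin

/-- coefficients of the q-binomial series -/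
noncomputable def c (q a : ℂ) (n : ℕ) : ℂ := qp q a n / qp q q n

/-- the q-binomial series -/
noncomputable def S (q a z : ℂ) : ℂ := ∑' n : ℕ, c q a n * z ^ n

variable {q a z : ℂ}

lemma den_ne (hq : ‖q‖ < 1) (n : ℕ) : (1 - q * q ^ n) ≠ 0 := by
  intro h
  have h1 : q * q ^ n = 1 := by linear_combination -h
  have : ‖q * q ^ n‖ < 1 := by
    rw [norm_mul, norm_pow]
    calc ‖q‖ * ‖q‖ ^ n ≤ ‖q‖ * 1 := by
          exact mul_le_mul_of_nonneg_left (pow_le_one₀ (norm_nonneg q) hq.le) (norm_nonneg q)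
      _ < 1 := by simpa using hq
  rw [h1] at this; simp at this

lemma qpq_ne (hq : ‖q‖ < 1) (n : ℕ) : qp q q n ≠ 0 := by
  unfold qp
  exact Finset.prod_ne_zero_iff.2 fun k _ => den_ne hq k

lemma c_zero : c q a 0 = 1 := by simp [c, qp]

lemma c_rec (n : ℕ) : c q a (n + 1) = c q a n * ((1 - a * q ^ n) / (1 - q * q ^ n)) := by
  unfold c qp
  rw [Finset.prod_range_succ, Finset.prod_range_succ, mul_div_mul_comm]

lemma c_key (hq : ‖q‖ < 1) (n : ℕ) :
    c q a (n + 1) * (1 - q * q ^ n) = c q a n * (1 - a * q ^ n) := by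
  rw [c_rec, mul_assoc, div_mul_cancel₀ _ (den_ne hq n)]

/-- ratio-test summability of the norms -/
lemma summable_norm (hq : ‖q‖ < 1) (a : ℂ) {r : ℝ} (hr0 : 0 ≤ r) (hr : r < 1) :
    Summable (fun n : ℕ => ‖c q a n‖ * r ^ n) := by
  set ρ : ℝ := (1 + r) / 2 with hρ
  have hρ1 : ρ < 1 := by rw [hρ]; linarith
  have hrρ : r < ρ := by rw [hρ]; linarith
  have htend : Tendsto (fun n : ℕ => r * (‖1 - a * q ^ n‖ / ‖1 - q * q ^ n‖)) atTop (𝓝 r) := by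
    have hq0 : Tendsto (fun n : ℕ => q ^ n) atTop (𝓝 0) :=
      tendsto_pow_atTop_nhds_zero_of_norm_lt_one hq
    have h1 : Tendsto (fun n : ℕ => ‖1 - a * q ^ n‖) atTop (𝓝 ‖(1 : ℂ)‖) := by
      have : Tendsto (fun n : ℕ => (1 : ℂ) - a * q ^ n) atTop (𝓝 (1 - a * 0)) :=
        tendsto_const_nhds.sub (tendsto_const_nhds.mul hq0)
      simpa using this.norm
    have h2 : Tendsto (fun n : ℕ => ‖1 - q * q ^ n‖) atTop (𝓝 ‖(1 : ℂ)‖) := by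
      have : Tendsto (fun n : ℕ => (1 : ℂ) - q * q ^ n) atTop (𝓝 (1 - q * 0)) :=
        tendsto_const_nhds.sub (tendsto_const_nhds.mul hq0)
      simpa using this.norm
    have := (h1.div h2 (by simp)).const_mul r
    simpa using this
  have hev : ∀ᶠ n in atTop, r * (‖1 - a * q ^ n‖ / ‖1 - q * q ^ n‖) ≤ ρ :=
    htend.eventually_le_const hrρ
  apply summable_of_ratio_norm_eventually_le hρ1
  filter_upwards [hev] with n hn
  have hnn : (0 : ℝ) ≤ ‖c q a n‖ * r ^ n := by positivity
  have hcn : ‖c q a (n + 1)‖ = ‖c q a n‖ * (‖1 - a * q ^ n‖ / ‖1 - q * q ^ n‖) := by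
    rw [c_rec, norm_mul, norm_div]
  rw [Real.norm_of_nonneg (by positivity), Real.norm_of_nonneg hnn, hcn, pow_succ]
  calc ‖c q a n‖ * (‖1 - a * q ^ n‖ / ‖1 - q * q ^ n‖) * (r ^ n * r)
      = (r * (‖1 - a * q ^ n‖ / ‖1 - q * q ^ n‖)) * (‖c q a n‖ * r ^ n) := by ring
    _ ≤ ρ * (‖c q a n‖ * r ^ n) := mul_le_mul_of_nonneg_right hn hnn

lemma summable_term (hq : ‖q‖ < 1) (a : ℂ) (hz : ‖z‖ < 1) :
    Summable (fun n : ℕ => c q a n * z ^ n) := by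
  apply Summable.of_norm
  have := summable_norm hq a (norm_nonneg z) hz
  simpa [norm_mul, norm_pow] using this

lemma hasSum_S (hq : ‖q‖ < 1) (a : ℂ) (hz : ‖z‖ < 1) :
    HasSum (fun n : ℕ => c q a n * z ^ n) (S q a z) :=
  (summable_term hq a hz).hasSum

lemma norm_qz (hq : ‖q‖ < 1) (hz : ‖z‖ < 1) : ‖q * z‖ < 1 := by
  rw [norm_mul]
  nlinarith [norm_nonneg q, norm_nonneg z]

/-- the functional equation -/
lemma feq (hq : ‖q‖ < 1) (a : ℂ) (hz : ‖z‖ < 1) :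
    (1 - z) * S q a z = (1 - a * z) * S q a (q * z) := by
  have hA := hasSum_S hq a hz
  have hB := hasSum_S hq a (norm_qz hq hz)
  have hg : HasSum (fun n : ℕ => c q a n * z ^ n - c q a n * (q * z) ^ n)
      (S q a z - S q a (q * z)) := hA.sub hB
  have hh : HasSum (fun n : ℕ => z * (c q a n * z ^ n) - (a * z) * (c q a n * (q * z) ^ n))
      (z * S q a z - (a * z) * S q a (q * z)) := (hA.mul_left z).sub (hB.mul_left (a * z))
  have key : ∀ n : ℕ, c q a (n + 1) * z ^ (n + 1) - c q a (n + 1) * (q * z) ^ (n + 1)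
      = z * (c q a n * z ^ n) - (a * z) * (c q a n * (q * z) ^ n) := by
    intro n
    have h := c_key (a := a) hq n
    have hqz : (q * z) ^ (n + 1) = q * q ^ n * z ^ (n + 1) := by ring
    rw [hqz]
    linear_combination z ^ (n + 1) * h
  have hh' : HasSum (fun n : ℕ => c q a (n + 1) * z ^ (n + 1) - c q a (n + 1) * (q * z) ^ (n + 1))
      (z * S q a z - (a * z) * S q a (q * z)) := by
    have he : (fun n : ℕ => c q a (n + 1) * z ^ (n + 1) - c q a (n + 1) * (q * z) ^ (n + 1))
        = (fun n : ℕ => z * (c q a n * z ^ n) - (a * z) * (c q a n * (q * z) ^ n)) :=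
      funext key
    rw [he]; exact hh
  have hg' : HasSum (fun n : ℕ => c q a n * z ^ n - c q a n * (q * z) ^ n)
      ((z * S q a z - (a * z) * S q a (q * z))
        + ∑ i ∈ Finset.range 1, (c q a i * z ^ i - c q a i * (q * z) ^ i)) :=
    (hasSum_nat_add_iff (f := fun n : ℕ => c q a n * z ^ n - c q a n * (q * z) ^ n) 1).mp hh'
  have h0 : ∑ i ∈ Finset.range 1, (c q a i * z ^ i - c q a i * (q * z) ^ i) = 0 := by
    simp
  rw [h0, add_zero] at hg'
  have := hg.unique hg'
  linear_combination this

/-- the iterated functional equation -/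
lemma iter (hq : ‖q‖ < 1) (a : ℂ) (hz : ‖z‖ < 1) (N : ℕ) :
    qp q z N * S q a z = qp q (a * z) N * S q a (q ^ N * z) := by
  induction N with
  | zero => simp [qp]
  | succ N ih =>
    have hzN : ‖q ^ N * z‖ < 1 := by
      rw [norm_mul, norm_pow]
      calc ‖q‖ ^ N * ‖z‖ ≤ 1 * ‖z‖ := by
            exact mul_le_mul_of_nonneg_right (pow_le_one₀ (norm_nonneg q) hq.le) (norm_nonneg z)
        _ < 1 := by simpa using hz
    have hf := feq hq a hzN
    unfold qp at ih ⊢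
    rw [Finset.prod_range_succ, Finset.prod_range_succ]
    have hq1 : q * (q ^ N * z) = q ^ (N + 1) * z := by ring
    rw [hq1] at hf
    calc (∏ k ∈ Finset.range N, (1 - z * q ^ k)) * (1 - z * q ^ N) * S q a z
        = (1 - z * q ^ N) * ((∏ k ∈ Finset.range N, (1 - z * q ^ k)) * S q a z) := by ring
      _ = (1 - z * q ^ N) * ((∏ k ∈ Finset.range N, (1 - a * z * q ^ k)) * S q a (q ^ N * z)) := by
            rw [ih]
      _ = (∏ k ∈ Finset.range N, (1 - a * z * q ^ k)) * ((1 - q ^ N * z) * S q a (q ^ N * z)) := by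
            ring
      _ = (∏ k ∈ Finset.range N, (1 - a * z * q ^ k)) * ((1 - a * (q ^ N * z))
            * S q a (q ^ (N + 1) * z)) := by rw [hf]
      _ = (∏ k ∈ Finset.range N, (1 - a * z * q ^ k)) * (1 - a * z * q ^ N)
            * S q a (q ^ (N + 1) * z) := by ring

/-- continuity of the series at the origin along `q ^ N * z` -/
lemma tendsto_S_one (hq : ‖q‖ < 1) (a : ℂ) (hz : ‖z‖ < 1) :
    Tendsto (fun N : ℕ => S q a (q ^ N * z)) atTop (𝓝 1) := by
  set B : ℝ := ∑' n : ℕ, ‖c q a (n + 1)‖ * ‖z‖ ^ (n + 1) with hB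
  have hsum : Summable (fun n : ℕ => ‖c q a n‖ * ‖z‖ ^ n) :=
    summable_norm hq a (norm_nonneg z) hz
  have hsum1 : Summable (fun n : ℕ => ‖c q a (n + 1)‖ * ‖z‖ ^ (n + 1)) :=
    (summable_nat_add_iff 1).2 hsum
  have hbound : ∀ N : ℕ, ‖S q a (q ^ N * z) - 1‖ ≤ ‖q‖ ^ N * B := by
    intro N
    set w : ℂ := q ^ N * z with hw
    have hwlt : ‖w‖ < 1 := by
      rw [hw, norm_mul, norm_pow]
      calc ‖q‖ ^ N * ‖z‖ ≤ 1 * ‖z‖ := by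
            exact mul_le_mul_of_nonneg_right (pow_le_one₀ (norm_nonneg q) hq.le) (norm_nonneg z)
        _ < 1 := by simpa using hz
    have hS := hasSum_S hq a hwlt
    have hshift : HasSum (fun n : ℕ => c q a (n + 1) * w ^ (n + 1)) (S q a w - 1) := by
      have h0 := (hasSum_nat_add_iff' (f := fun n : ℕ => c q a n * w ^ n) 1).2 hS
      have h1 : ∑ i ∈ Finset.range 1, c q a i * w ^ i = 1 := by simp [c_zero]
      rwa [h1] at h0
    have hsumw : Summable (fun n : ℕ => ‖c q a (n + 1) * w ^ (n + 1)‖) := by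
      refine Summable.of_nonneg_of_le (fun n => norm_nonneg _) (fun n => ?_) hsum1
      rw [norm_mul, norm_pow]
      have : ‖w‖ ≤ ‖z‖ := by
        rw [hw, norm_mul, norm_pow]
        calc ‖q‖ ^ N * ‖z‖ ≤ 1 * ‖z‖ := by
              exact mul_le_mul_of_nonneg_right (pow_le_one₀ (norm_nonneg q) hq.le) (norm_nonneg z)
          _ = ‖z‖ := one_mul _
      exact mul_le_mul_of_nonneg_left (pow_le_pow_left₀ (norm_nonneg w) this _) (norm_nonneg _)
    have h1 : ‖S q a w - 1‖ ≤ ∑' n : ℕ, ‖c q a (n + 1) * w ^ (n + 1)‖ := by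
      rw [← hshift.tsum_eq]
      exact norm_tsum_le_tsum_norm hsumw
    have h2 : ∑' n : ℕ, ‖c q a (n + 1) * w ^ (n + 1)‖
        ≤ ∑' n : ℕ, ‖q‖ ^ N * (‖c q a (n + 1)‖ * ‖z‖ ^ (n + 1)) := by
      apply Summable.tsum_le_tsum _ hsumw (hsum1.mul_left _)
      intro n
      rw [norm_mul, norm_pow]
      have hwn : ‖w‖ ^ (n + 1) ≤ ‖q‖ ^ N * ‖z‖ ^ (n + 1) := by
        rw [hw, norm_mul, norm_pow, mul_pow, ← pow_mul]
        have : ‖q‖ ^ (N * (n + 1)) ≤ ‖q‖ ^ N := by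
          apply pow_le_pow_of_le_one (norm_nonneg q) hq.le
          nlinarith
        exact mul_le_mul_of_nonneg_right this (pow_nonneg (norm_nonneg z) _)
      calc ‖c q a (n + 1)‖ * ‖w‖ ^ (n + 1)
          ≤ ‖c q a (n + 1)‖ * (‖q‖ ^ N * ‖z‖ ^ (n + 1)) :=
            mul_le_mul_of_nonneg_left hwn (norm_nonneg _)
        _ = ‖q‖ ^ N * (‖c q a (n + 1)‖ * ‖z‖ ^ (n + 1)) := by ring
    calc ‖S q a w - 1‖ ≤ ∑' n : ℕ, ‖q‖ ^ N * (‖c q a (n + 1)‖ * ‖z‖ ^ (n + 1)) :=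
          h1.trans h2
      _ = ‖q‖ ^ N * B := by rw [hB, tsum_mul_left]
  rw [tendsto_iff_norm_sub_tendsto_zero]
  apply squeeze_zero (fun N => norm_nonneg _) hbound
  have := (tendsto_pow_atTop_nhds_zero_of_lt_one (norm_nonneg q) hq).mul_const B
  simpa using this

lemma factor_ne (hq : ‖q‖ < 1) (ha : ‖a‖ < 1) (k : ℕ) : (1 - a * q ^ k) ≠ 0 := by
  intro h
  have h1 : a * q ^ k = 1 := by linear_combination -h
  have : ‖a * q ^ k‖ < 1 := by
    rw [norm_mul, norm_pow]
    calc ‖a‖ * ‖q‖ ^ k ≤ ‖a‖ * 1 :=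
          mul_le_mul_of_nonneg_left (pow_le_one₀ (norm_nonneg q) hq.le) (norm_nonneg a)
      _ < 1 := by simpa using ha
  rw [h1] at this; simp at this

lemma summable_log (hq : ‖q‖ < 1) (a : ℂ) :
    Summable (fun k : ℕ => Complex.log (1 - a * q ^ k)) := by
  have hgeo : Summable (fun k : ℕ => 3 / 2 * (‖a‖ * ‖q‖ ^ k)) :=
    ((summable_geometric_of_lt_one (norm_nonneg q) hq).mul_left ‖a‖).mul_left _
  apply hgeo.of_norm_bounded_eventually_nat
  have htend : Tendsto (fun k : ℕ => ‖a‖ * ‖q‖ ^ k) atTop (𝓝 0) := by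
    have := (tendsto_pow_atTop_nhds_zero_of_lt_one (norm_nonneg q) hq).const_mul ‖a‖
    simpa using this
  filter_upwards [htend.eventually_le_const (by norm_num : (0 : ℝ) < 1 / 2)] with k hk
  have h1 : ‖-(a * q ^ k)‖ ≤ 1 / 2 := by
    rw [norm_neg, norm_mul, norm_pow]; exact hk
  have := Complex.norm_log_one_add_half_le_self h1
  rw [show (1 : ℂ) + -(a * q ^ k) = 1 - a * q ^ k by ring] at this
  rw [norm_neg, norm_mul, norm_pow] at this
  exact this

lemma hasProd_qpinf (hq : ‖q‖ < 1) (ha : ‖a‖ < 1) :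
    HasProd (fun k : ℕ => 1 - a * q ^ k) (qpinf q a) := by
  have := (Complex.hasProd_of_hasSum_log (fun k => factor_ne hq ha k)
    (summable_log hq a).hasSum).multipliable.hasProd
  exact this

lemma tendsto_qp (hq : ‖q‖ < 1) (ha : ‖a‖ < 1) :
    Tendsto (fun n : ℕ => qp q a n) atTop (𝓝 (qpinf q a)) :=
  (hasProd_qpinf hq ha).tendsto_prod_nat

lemma qpinf_ne (hq : ‖q‖ < 1) (ha : ‖a‖ < 1) : qpinf q a ≠ 0 := by
  have := Complex.cexp_tsum_eq_tprod (fun k => factor_ne hq ha k)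
    (summable_log hq a)
  rw [show qpinf q a = ∏' k : ℕ, (1 - a * q ^ k) from rfl, ← this]
  exact Complex.exp_ne_zero _

/-- the q-binomial theorem (specialized form) -/
lemma S_eq (hq : ‖q‖ < 1) (a : ℂ) (hz0 : z ≠ 0) (hz : ‖z‖ < 1) (haz : ‖a * z‖ < 1) :
    S q a z = qpinf q (a * z) / qpinf q z := by
  have hL : Tendsto (fun N : ℕ => qp q z N * S q a z) atTop (𝓝 (qpinf q z * S q a z)) :=
    (tendsto_qp hq hz).mul_const _
  have hR : Tendsto (fun N : ℕ => qp q (a * z) N * S q a (q ^ N * z)) atTop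
      (𝓝 (qpinf q (a * z) * 1)) :=
    (tendsto_qp hq haz).mul (tendsto_S_one hq a hz)
  have heq : (fun N : ℕ => qp q z N * S q a z)
      = fun N : ℕ => qp q (a * z) N * S q a (q ^ N * z) := funext (iter hq a hz)
  rw [heq] at hL
  have := tendsto_nhds_unique hL hR
  rw [mul_one] at this
  field_simp [qpinf_ne hq hz]
  linear_combination this

end QBin

open QBin in
theorem half_plus_series (q : ℂ) (hq : ‖q‖ < 1) :
    (1 / 2 : ℂ) + ∑' n : ℕ, qp (q ^ 2) (-q ^ 2) n / qp (q ^ 2) (q ^ 2) (n + 1) * (-q) ^ (n + 1) =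
      (1 / 2) * qpinf (q ^ 2) q / qpinf (q ^ 2) (-q) := by
  have hqn : ‖q‖ < 1 := hq
  by_cases hq0 : q = 0
  · subst hq0
    have h1 : ∀ n : ℕ, qp ((0 : ℂ) ^ 2) (-(0 : ℂ) ^ 2) n / qp ((0 : ℂ) ^ 2) ((0 : ℂ) ^ 2) (n + 1)
        * (-(0 : ℂ)) ^ (n + 1) = 0 := by
      intro n; simp
    rw [tsum_congr h1, tsum_zero]
    have h2 : qpinf ((0 : ℂ) ^ 2) 0 = 1 := by
      unfold qpinf; simp
    have h3 : qpinf ((0 : ℂ) ^ 2) (-0) = 1 := by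
      unfold qpinf; simp
    rw [h2, h3]; norm_num
  · set Q : ℂ := q ^ 2 with hQdef
    have hQ : ‖Q‖ < 1 := by
      rw [hQdef, norm_pow]
      nlinarith [norm_nonneg q]
    have hz : ‖(-q : ℂ)‖ < 1 := by rwa [norm_neg]
    have hz0 : (-q : ℂ) ≠ 0 := neg_ne_zero.2 hq0
    have haz : ‖(-1 : ℂ) * (-q)‖ < 1 := by
      rw [show (-1 : ℂ) * (-q) = q by ring]; exact hqn
    -- relate the terms of the sum to the coefficients c
    have hterm : ∀ n : ℕ, qp Q (-Q) n / qp Q Q (n + 1) * (-q) ^ (n + 1)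
        = (1 / 2 : ℂ) * (c Q (-1) (n + 1) * (-q) ^ (n + 1)) := by
      intro n
      have h2 : qp Q (-1 : ℂ) (n + 1) = 2 * qp Q (-Q) n := by
        unfold qp
        rw [Finset.prod_range_succ']
        have : ∀ k ∈ Finset.range n, (1 - (-1 : ℂ) * Q ^ (k + 1)) = (1 - -Q * Q ^ k) := by
          intro k _; ring
        rw [Finset.prod_congr rfl this]
        have h20 : (1 : ℂ) - (-1) * Q ^ 0 = 2 := by norm_num
        rw [h20, mul_comm]
      rw [c, h2]
      ring
    rw [tsum_congr hterm, tsum_mul_left]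
    -- sum of shifted coefficients
    have hS : HasSum (fun n : ℕ => c Q (-1 : ℂ) n * (-q) ^ n) (S Q (-1) (-q)) :=
      hasSum_S hQ (-1) hz
    have hshift : HasSum (fun n : ℕ => c Q (-1 : ℂ) (n + 1) * (-q) ^ (n + 1))
        (S Q (-1) (-q) - 1) := by
      have h0 := (hasSum_nat_add_iff' (f := fun n : ℕ => c Q (-1 : ℂ) n * (-q) ^ n) 1).2 hS
      have h1 : ∑ i ∈ Finset.range 1, c Q (-1 : ℂ) i * (-q) ^ i = 1 := by simp [c_zero]
      rwa [h1] at h0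
    rw [hshift.tsum_eq]
    have hmain := S_eq hQ (-1 : ℂ) hz0 hz haz
    rw [show (-1 : ℂ) * (-q) = q by ring] at hmain
    rw [hmain]
    have hne := qpinf_ne hQ hz
    field_simp
    ring
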